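/- Let p be an odd prime, A = Z[X_1,...,X_n] a polynomial ring over Z, and f_1, ..., f_r distinct nonzero elements of A with f_i ≠ -f_j for all i ≠ j. Then the Teichmüller sequences ⟨f_i⟩ := (f_i, f_i^p, f_i^{p^2}, ...) ∈ A^ℕ are Z-linearly independent in the A-module A^ℕ (with Z acting diagonally). -/

import Mathlib

lemma pow_aux (m N : ℕ) : m^N * (m + N + 1) ≤ (m+1)^(N+1) := by
  induction N with
  | zero => simp
  | succ N ih =>
    have hinner : m * (m + (N+1) + 1) ≤ (m + N + 1) * (m+1) := by nlinarith
    calc m^(N+1) * (m + (N+1) + 1) = m^N * (m * (m + (N+1) + 1)) := by ring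
    _ ≤ m^N * ((m + N + 1) * (m+1)) := Nat.mul_le_mul_left _ hinner
    _ = m^N * (m + N + 1) * (m+1) := by ring
    _ ≤ (m+1)^(N+1) * (m+1) := Nat.mul_le_mul_right _ ih
    _ = (m+1)^(N+2) := by ring

lemma growth (C m N : ℕ) (hm : 1 ≤ m) (hN : C * m < N) : C * m^N < (m+1)^N := by
  obtain ⟨N', rfl⟩ : ∃ N', N = N' + 1 := ⟨N - 1, by omega⟩
  have hp : 0 < m ^ N' := pow_pos hm _
  calc C * m^(N'+1) = m^N' * (m * C) := by ring
  _ < m^N' * (m + N' + 1) := by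
      exact Nat.mul_lt_mul_of_pos_left (by rw [Nat.mul_comm m C]; omega) hp
  _ ≤ (m+1)^(N'+1) := pow_aux m N'

lemma int_key (p : ℕ) (hp : 1 < p) {r : ℕ} (a c : Fin r → ℤ)
    (ha : ∀ i, a i ≠ 0)
    (hd : ∀ i j, i ≠ j → (a i).natAbs ≠ (a j).natAbs)
    (h : ∀ k, ∑ i, c i * a i ^ p ^ k = 0) : ∀ i, c i = 0 := by
  by_contra hc
  push_neg at hc
  obtain ⟨i, hi⟩ := hc
  set S := Finset.univ.filter (fun i => c i ≠ 0) with hSdef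
  have hS : S.Nonempty := ⟨i, by simp [hSdef, hi]⟩
  obtain ⟨i0, hi0S, hmax⟩ := S.exists_max_image (fun i => (a i).natAbs) hS
  have hci0 : c i0 ≠ 0 := (Finset.mem_filter.mp hi0S).2
  set T := S.erase i0 with hTdef
  set m := T.sup (fun i => (a i).natAbs) with hmdef
  set C := ∑ i ∈ T, (c i).natAbs with hCdef
  have hsS : ∀ k, ∑ i ∈ S, c i * a i ^ p ^ k = 0 := by
    intro k
    rw [← h k]
    apply Finset.sum_subset (Finset.filter_subset _ _)
    intro x _ hx
    simp only [hSdef, Finset.mem_filter, Finset.mem_univ, true_and, not_not] at hx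
    simp [hx]
  have hbound : ∀ k, (c i0).natAbs * (a i0).natAbs ^ (p^k) ≤ C * m ^ (p^k) := by
    intro k
    have h1 : c i0 * a i0 ^ p^k + ∑ i ∈ T, c i * a i ^ p^k = 0 := by
      rw [hTdef]
      exact (Finset.add_sum_erase S _ hi0S).trans (hsS k)
    have h2 : c i0 * a i0 ^ p^k = - ∑ i ∈ T, c i * a i ^ p^k := by linarith
    calc (c i0).natAbs * (a i0).natAbs ^ p^k = (c i0 * a i0 ^ p^k).natAbs := by
          rw [Int.natAbs_mul, Int.natAbs_pow]
    _ = (∑ i ∈ T, c i * a i ^ p^k).natAbs := by rw [h2, Int.natAbs_neg]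
    _ ≤ ∑ i ∈ T, (c i * a i ^ p^k).natAbs := nat_abs_sum_le _ _
    _ ≤ ∑ i ∈ T, (c i).natAbs * m ^ p^k := by
        apply Finset.sum_le_sum
        intro j hj
        rw [Int.natAbs_mul, Int.natAbs_pow]
        exact Nat.mul_le_mul_left _
          (Nat.pow_le_pow_left (Finset.le_sup (f := fun i => (a i).natAbs) hj) _)
    _ = C * m ^ p^k := by rw [← Finset.sum_mul]
  have hc1 : 1 ≤ (c i0).natAbs := Int.natAbs_pos.mpr hci0
  by_cases hT : T.Nonempty
  · have hm1 : 1 ≤ m := by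
      obtain ⟨j, hj⟩ := hT
      have : 1 ≤ (a j).natAbs := Int.natAbs_pos.mpr (ha j)
      exact le_trans this (Finset.le_sup (f := fun i => (a i).natAbs) hj)
    have hma : m + 1 ≤ (a i0).natAbs := by
      have hlt : m < (a i0).natAbs := by
        rw [hmdef]
        apply Finset.sup_lt_iff (Int.natAbs_pos.mpr (ha i0)) |>.mpr
        intro j hj
        have hjS : j ∈ S := Finset.mem_of_mem_erase hj
        have hjne : j ≠ i0 := Finset.ne_of_mem_erase hj
        exact lt_of_le_of_ne (hmax j hjS) (hd j i0 hjne)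
      omega
    set N := p ^ (C * m) with hNdef
    have hCN : C * m < N := Nat.lt_pow_self hp
    have hg : C * m ^ N < (m+1)^N := growth C m N hm1 hCN
    have hb := hbound (C * m)
    have : (m+1)^N ≤ C * m ^ N := by
      calc (m+1)^N ≤ (a i0).natAbs ^ N := Nat.pow_le_pow_left hma _
      _ ≤ (c i0).natAbs * (a i0).natAbs ^ N := Nat.le_mul_of_pos_left _ hc1
      _ ≤ C * m ^ N := hb
    omega
  · have hC0 : C = 0 := by
      rw [hCdef, Finset.not_nonempty_iff_eq_empty.mp hT, Finset.sum_empty]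
    have hb := hbound 0
    rw [hC0] at hb
    simp only [zero_mul, Nat.le_zero, Nat.mul_eq_zero, pow_eq_zero_iff] at hb
    have ha1 : 1 ≤ (a i0).natAbs := Int.natAbs_pos.mpr (ha i0)
    have : 0 < (a i0).natAbs ^ (p ^ 0) := pow_pos ha1 _
    omega

/-- The Teichmüller sequence `⟨r⟩ = (r, r^p, r^{p^2}, ...)` in `A^ℕ`. -/
def teich (p : ℕ) {A : Type*} [CommRing A] (r : A) : ℕ → A := fun k => r ^ p ^ k

theorem stmt_3 (p : ℕ) (hp : p.Prime) (hodd : p ≠ 2) (n r : ℕ)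
    (f : Fin r → MvPolynomial (Fin n) ℤ)
    (hne : ∀ i, f i ≠ 0)
    (hdist : ∀ i j : Fin r, i ≠ j → f i ≠ f j ∧ f i ≠ -f j)
    (c : Fin r → ℤ)
    (hsum : ∑ i, c i • teich p (f i) = 0) :
    ∀ i, c i = 0 := by
  classical
  set P : MvPolynomial (Fin n) ℤ :=
    (∏ i, f i) * ∏ q ∈ Finset.univ.offDiag, ((f q.1 - f q.2) * (f q.1 + f q.2)) with hPdef
  have hP : P ≠ 0 := by
    apply mul_ne_zero
    · exact Finset.prod_ne_zero_iff.mpr fun i _ => hne i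
    · apply Finset.prod_ne_zero_iff.mpr
      intro q hq
      have hq' := (Finset.mem_offDiag.mp hq).2.2
      refine mul_ne_zero (sub_ne_zero.mpr (hdist q.1 q.2 hq').1) ?_
      intro h
      exact (hdist q.1 q.2 hq').2 (eq_neg_of_add_eq_zero_left h)
  obtain ⟨x, hxP⟩ : ∃ x : Fin n → ℤ, MvPolynomial.eval x P ≠ 0 := by
    by_contra h
    push_neg at h
    exact hP (MvPolynomial.funext fun x => by simp [h x])
  set a : Fin r → ℤ := fun i => MvPolynomial.eval x (f i) with hadef
  have hPx : MvPolynomial.eval x P =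
      (∏ i, a i) * ∏ q ∈ Finset.univ.offDiag, ((a q.1 - a q.2) * (a q.1 + a q.2)) := by
    simp [hPdef, hadef, map_mul, map_prod, map_sub, map_add]
  rw [hPx] at hxP
  have h1 : ∀ i, a i ≠ 0 := by
    intro i
    have := (mul_ne_zero_iff.mp hxP).1
    exact Finset.prod_ne_zero_iff.mp this i (Finset.mem_univ i)
  have h2 : ∀ i j : Fin r, i ≠ j → (a i).natAbs ≠ (a j).natAbs := by
    intro i j hij habs
    have hq : (⟨i, j⟩ : Fin r × Fin r) ∈ Finset.univ.offDiag := by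
      simp [Finset.mem_offDiag, hij]
    have := Finset.prod_ne_zero_iff.mp (mul_ne_zero_iff.mp hxP).2 ⟨i, j⟩ hq
    rcases Int.natAbs_eq_natAbs_iff.mp habs with h | h
    · exact this (by rw [sub_eq_zero.mpr h]; ring)
    · exact this (by rw [h]; ring)
  have hk : ∀ k, ∑ i, c i * a i ^ p ^ k = 0 := by
    intro k
    have h0 := congrFun hsum k
    simp only [Finset.sum_apply, Pi.smul_apply, Pi.zero_apply, teich] at h0
    have := congrArg (MvPolynomial.eval x) h0
    simpa [map_sum, zsmul_eq_mul, hadef] using this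
  exact int_key p hp.one_lt a c h1 h2 hk
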